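/- arXiv:1702.01075 — 7 statements merged into one kernel-verified Lean document; each statement's English description precedes it below -/
import Mathlib

section
/- The gradient of F(r) = Σ_{i<j} α_{ij} [(x_i-x_j)^4 + (y_i-y_j)^4 + ((z_i-z_j)/c)^4] vanishes at a point r if and only if α_{ij}·(r_i - r_j) = 0 for all pairs i < j. -/
noncomputable def Pm (m : ℕ) (i : Fin m) (k : Fin 3) : (Fin m → Fin 3 → ℝ) →L[ℝ] ℝ :=
  (ContinuousLinearMap.proj (R := ℝ) (φ := fun _ : Fin 3 => ℝ) k).comp
    (ContinuousLinearMap.proj (R := ℝ) (φ := fun _ : Fin m => Fin 3 → ℝ) i)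

@[simp] theorem Pm_apply (m : ℕ) (i : Fin m) (k : Fin 3) (r : Fin m → Fin 3 → ℝ) :
    Pm m i k r = r i k := rfl

noncomputable def Dij (m : ℕ) (c : ℝ) (i j : Fin m) (r : Fin m → Fin 3 → ℝ) :
    (Fin m → Fin 3 → ℝ) →L[ℝ] ℝ :=
  ((4 * (r i 0 - r j 0) ^ 3) • (Pm m i 0 - Pm m j 0)
    + (4 * (r i 1 - r j 1) ^ 3) • (Pm m i 1 - Pm m j 1))
    + (4 * ((r i 2 - r j 2) / c) ^ 3) • (c⁻¹ • (Pm m i 2 - Pm m j 2))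

theorem keyTerm (m : ℕ) (i j : Fin m) (r : Fin m → Fin 3 → ℝ) (c : ℝ) (a : ℝ) :
    HasFDerivAt (fun r' : Fin m → Fin 3 → ℝ =>
        a * ((r' i 0 - r' j 0) ^ 4 + (r' i 1 - r' j 1) ^ 4 + ((r' i 2 - r' j 2) / c) ^ 4))
      (a • Dij m c i j r) r := by
  have hL : ∀ k : Fin 3, HasFDerivAt (fun r' : Fin m → Fin 3 → ℝ => r' i k - r' j k)
      (Pm m i k - Pm m j k) r := by
    intro k
    have := ((Pm m i k).hasFDerivAt (x := r)).sub ((Pm m j k).hasFDerivAt (x := r))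
    exact this
  have h0 := (hasDerivAt_pow 4 (r i 0 - r j 0)).comp_hasFDerivAt r (hL 0)
  have h1 := (hasDerivAt_pow 4 (r i 1 - r j 1)).comp_hasFDerivAt r (hL 1)
  have h2' : HasFDerivAt (fun r' : Fin m → Fin 3 → ℝ => (r' i 2 - r' j 2) / c)
      (c⁻¹ • (Pm m i 2 - Pm m j 2)) r := by
    simp only [div_eq_mul_inv]
    exact (hL 2).mul_const c⁻¹
  have h2 := (hasDerivAt_pow 4 ((r i 2 - r j 2) / c)).comp_hasFDerivAt r h2'
  have := (((h0.add h1).add h2).const_mul a)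
  refine this.congr_fderiv ?_
  unfold Dij
  norm_num

theorem keyF (m : ℕ) (c : ℝ) (α : Fin m → Fin m → ℝ) (r : Fin m → Fin 3 → ℝ) :
    HasFDerivAt (fun r : Fin m → Fin 3 → ℝ =>
        ∑ i : Fin m, ∑ j : Fin m, if i < j then
          α i j * ((r i 0 - r j 0) ^ 4 + (r i 1 - r j 1) ^ 4 + ((r i 2 - r j 2) / c) ^ 4)
        else 0)
      (∑ i : Fin m, ∑ j : Fin m, if i < j then α i j • Dij m c i j r else 0) r := by
  apply HasFDerivAt.fun_sum
  intro i _
  apply HasFDerivAt.fun_sum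
  intro j _
  by_cases h : i < j
  · simp only [if_pos h]
    exact keyTerm m i j r c (α i j)
  · simp only [if_neg h]
    exact hasFDerivAt_const 0 r

/-- the gradient of F vanishes at r iff α_{ij}·(r_i - r_j) = 0 for all i < j. -/
theorem stmt1 (m : ℕ) (hm : 2 ≤ m) (c : ℝ) (hc : 0 < c)
    (α : Fin m → Fin m → ℝ) (hα : ∀ i j, 0 ≤ α i j)
    (r : Fin m → Fin 3 → ℝ) :
    fderiv ℝ (fun r : Fin m → Fin 3 → ℝ =>
        ∑ i : Fin m, ∑ j : Fin m, if i < j then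
          α i j * ((r i 0 - r j 0) ^ 4 + (r i 1 - r j 1) ^ 4 + ((r i 2 - r j 2) / c) ^ 4)
        else 0) r = 0
      ↔ ∀ i j : Fin m, i < j → α i j • (r i - r j) = (0 : Fin 3 → ℝ) := by
  have key := keyF m c α r
  rw [key.fderiv]
  constructor
  · intro h i j hij
    -- apply the zero map to direction r
    have happ := congrArg (fun L : (Fin m → Fin 3 → ℝ) →L[ℝ] ℝ => L r) h
    simp only [ContinuousLinearMap.zero_apply, ContinuousLinearMap.sum_apply,
      ContinuousLinearMap.smul_apply, apply_ite (fun L : (Fin m → Fin 3 → ℝ) →L[ℝ] ℝ => L r)]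
      at happ
    set E : Fin m → Fin m → ℝ := fun i' j' =>
      (r i' 0 - r j' 0) ^ 4 + (r i' 1 - r j' 1) ^ 4 + ((r i' 2 - r j' 2) / c) ^ 4 with hEdef
    -- each term of the sum equals 4 * (α i j * (a^4+b^4+(d/c)^4))
    have hre : ∀ i' j' : Fin m,
        (if i' < j' then α i' j' • (Dij m c i' j' r) r else (0 : ℝ))
        = if i' < j' then 4 * (α i' j' * E i' j') else 0 := by
      intro i' j'
      split
      · simp only [Dij, hEdef, ContinuousLinearMap.add_apply, ContinuousLinearMap.smul_apply,
          ContinuousLinearMap.sub_apply, Pm_apply, smul_eq_mul]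
        field_simp
      · rfl
    rw [Finset.sum_congr rfl fun i' _ => Finset.sum_congr rfl fun j' _ => hre i' j'] at happ
    have hnn : ∀ i' j' : Fin m, (0:ℝ) ≤ if i' < j' then 4 * (α i' j' * E i' j') else 0 := by
      intro i' j'
      split
      · have hE : 0 ≤ E i' j' := by
          have := sq_nonneg ((r i' 0 - r j' 0) ^ 2)
          have := sq_nonneg ((r i' 1 - r j' 1) ^ 2)
          have := sq_nonneg (((r i' 2 - r j' 2) / c) ^ 2)
          simp only [hEdef]; nlinarith
        exact mul_nonneg (by norm_num) (mul_nonneg (hα i' j') hE)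
      · exact le_refl 0
    have houter := (Finset.sum_eq_zero_iff_of_nonneg (fun i' _ =>
      Finset.sum_nonneg (fun j' _ => hnn i' j'))).1 happ i (Finset.mem_univ i)
    have hterm := (Finset.sum_eq_zero_iff_of_nonneg (fun j' _ => hnn i j')).1 houter j
      (Finset.mem_univ j)
    rw [if_pos hij] at hterm
    have hαE : α i j * E i j = 0 := by linarith
    funext k
    have hcne : c ≠ 0 := ne_of_gt hc
    rcases mul_eq_zero.1 hαE with ha | hE0
    · simp [ha]
    · have h4 : ∀ x y : ℝ, x ^ 4 + y = 0 → 0 ≤ y → x = 0 := by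
        intro x y hxy hy
        have hx4 : x ^ 4 = 0 := le_antisymm (by linarith) (by positivity)
        exact pow_eq_zero_iff (n := 4) (by norm_num) |>.1 hx4
      have h0' : r i 0 - r j 0 = 0 := by
        apply h4 _ ((r i 1 - r j 1) ^ 4 + ((r i 2 - r j 2) / c) ^ 4)
        · simp only [hEdef] at hE0; linarith
        · positivity
      have h1' : r i 1 - r j 1 = 0 := by
        apply h4 _ ((r i 0 - r j 0) ^ 4 + ((r i 2 - r j 2) / c) ^ 4)
        · simp only [hEdef] at hE0; linarith
        · positivity
      have h2' : r i 2 - r j 2 = 0 := by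
        have : (r i 2 - r j 2) / c = 0 := by
          apply h4 _ ((r i 0 - r j 0) ^ 4 + (r i 1 - r j 1) ^ 4)
          · simp only [hEdef] at hE0; linarith
          · positivity
        field_simp at this
        simpa using this
      fin_cases k <;> simp [h0', h1', h2']
  · intro h
    apply Finset.sum_eq_zero
    intro i _
    apply Finset.sum_eq_zero
    intro j _
    split
    · rename_i hij
      rcases eq_or_ne (α i j) 0 with ha | ha
      · simp [ha]
      · have hk : ∀ k : Fin 3, r i k - r j k = 0 := by
          intro k
          have := congrFun (h i j hij) k
          simp only [Pi.smul_apply, Pi.sub_apply, Pi.zero_apply, smul_eq_mul] at this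
          rcases mul_eq_zero.1 this with h' | h'
          · exact absurd h' ha
          · exact h'
        unfold Dij
        rw [hk 0, hk 1, hk 2]
        simp
    · rfl
end

section
/- If the positions r_i ∈ ℝ³ are pairwise distinct and the weights α_{ij} ≥ 0 satisfy Σ_{i<j} α_{ij} = 1, then the gradient of F(r) = Σ_{i<j} α_{ij} [(x_i-x_j)^4 + (y_i-y_j)^4 + ((z_i-z_j)/c)^4] at r is nonzero. -/
/-- with pairwise distinct positions and convex-combination weights,
the gradient of F at r is nonzero. -/
theorem stmt2 (m : ℕ) (hm : 2 ≤ m) (c : ℝ) (hc : 0 < c)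
    (α : Fin m → Fin m → ℝ) (hα : ∀ i j, 0 ≤ α i j)
    (hsum : ∑ i : Fin m, ∑ j : Fin m, (if i < j then α i j else 0) = 1)
    (r : Fin m → Fin 3 → ℝ) (hdist : ∀ i j : Fin m, i ≠ j → r i ≠ r j) :
    fderiv ℝ (fun r : Fin m → Fin 3 → ℝ =>
        ∑ i : Fin m, ∑ j : Fin m, if i < j then
          α i j * ((r i 0 - r j 0) ^ 4 + (r i 1 - r j 1) ^ 4 + ((r i 2 - r j 2) / c) ^ 4)
        else 0) r ≠ 0 := by
  set F : (Fin m → Fin 3 → ℝ) → ℝ := fun r : Fin m → Fin 3 → ℝ =>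
      ∑ i : Fin m, ∑ j : Fin m, if i < j then
        α i j * ((r i 0 - r j 0) ^ 4 + (r i 1 - r j 1) ^ 4 + ((r i 2 - r j 2) / c) ^ 4)
      else 0 with hF
  -- differentiability
  have hdiff : Differentiable ℝ F := by
    apply Differentiable.fun_sum; intro i _
    apply Differentiable.fun_sum; intro j _
    by_cases h : i < j
    · simp only [if_pos h]; fun_prop
    · simp only [if_neg h]; exact differentiable_const 0
  -- scaling identity
  have hscale : ∀ t : ℝ, F (t • r) = t ^ 4 * F r := by
    intro t
    simp only [hF, Pi.smul_apply, smul_eq_mul, Finset.mul_sum, mul_ite, mul_zero]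
    refine Finset.sum_congr rfl fun i _ => Finset.sum_congr rfl fun j _ => ?_
    split_ifs with h
    · field_simp
    · rfl
  -- the derivative of t ↦ F (t • r) at 1 is (fderiv F r) r
  have h1 : HasDerivAt (fun t : ℝ => F (t • r)) ((fderiv ℝ F r) r) 1 := by
    have hg : HasDerivAt (fun t : ℝ => t • r) ((1 : ℝ) • r) 1 :=
      (hasDerivAt_id (1 : ℝ)).smul_const r
    have hf : HasFDerivAt F (fderiv ℝ F r) ((1 : ℝ) • r) := by
      rw [one_smul]; exact (hdiff r).hasFDerivAt
    have := hf.comp_hasDerivAt (1 : ℝ) hg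
    simpa [Function.comp_def, one_smul] using this
  -- but also it is 4 * F r
  have h2 : HasDerivAt (fun t : ℝ => F (t • r)) (4 * F r) 1 := by
    have : HasDerivAt (fun t : ℝ => t ^ 4 * F r) ((4 : ℕ) * (1 : ℝ) ^ 3 * F r) 1 :=
      (hasDerivAt_pow 4 (1 : ℝ)).mul_const (F r)
    have h' : (fun t : ℝ => t ^ 4 * F r) = fun t : ℝ => F (t • r) := by
      funext t; rw [hscale]
    rw [h'] at this
    simpa using this
  have heuler : (fderiv ℝ F r) r = 4 * F r := h1.unique h2
  -- positivity of F r
  obtain ⟨i0, j0, hij0⟩ : ∃ i j : Fin m, (if i < j then α i j else 0) ≠ 0 := by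
    by_contra h
    push_neg at h
    have : (∑ i : Fin m, ∑ j : Fin m, (if i < j then α i j else 0)) = 0 :=
      Finset.sum_eq_zero fun i _ => Finset.sum_eq_zero fun j _ => h i j
    rw [hsum] at this; norm_num at this
  have hlt : i0 < j0 := by by_contra h; simp [h] at hij0
  have hαpos : 0 < α i0 j0 := lt_of_le_of_ne (hα i0 j0) (by simp [hlt] at hij0; exact Ne.symm hij0)
  -- bracket positivity
  have hne : r i0 ≠ r j0 := hdist i0 j0 (ne_of_lt hlt)
  obtain ⟨k, hk⟩ : ∃ k, r i0 k ≠ r j0 k := Function.ne_iff.mp hne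
  have hbr : 0 < (r i0 0 - r j0 0) ^ 4 + (r i0 1 - r j0 1) ^ 4 + ((r i0 2 - r j0 2) / c) ^ 4 := by
    have pos4 : ∀ x : ℝ, x ≠ 0 → 0 < x ^ 4 := by
      intro x hx
      have : 0 < x ^ 2 := by positivity
      calc (0:ℝ) < (x ^ 2) ^ 2 := by positivity
        _ = x ^ 4 := by ring
    fin_cases k
    · have h0 : r i0 0 - r j0 0 ≠ 0 := sub_ne_zero.mpr hk
      have := pos4 _ h0
      positivity
    · have h0 : r i0 1 - r j0 1 ≠ 0 := sub_ne_zero.mpr hk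
      nlinarith [pos4 _ h0, pow_le_pow_left₀ (le_refl (0:ℝ)) (le_refl (0:ℝ)) 4,
        sq_nonneg ((r i0 0 - r j0 0)^2), sq_nonneg ((r i0 2 - r j0 2)/c)]
    · have h0 : (r i0 2 - r j0 2) / c ≠ 0 :=
        div_ne_zero (sub_ne_zero.mpr hk) (ne_of_gt hc)
      nlinarith [pos4 _ h0, sq_nonneg ((r i0 0 - r j0 0)^2), sq_nonneg ((r i0 1 - r j0 1)^2)]
  have hFpos : 0 < F r := by
    have hterm : ∀ i j : Fin m, 0 ≤ (if i < j then
        α i j * ((r i 0 - r j 0) ^ 4 + (r i 1 - r j 1) ^ 4 + ((r i 2 - r j 2) / c) ^ 4) else 0) := by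
      intro i j
      split_ifs with h
      · have := hα i j; positivity
      · exact le_refl 0
    have hinner : ∀ i : Fin m, 0 ≤ ∑ j : Fin m, (if i < j then
        α i j * ((r i 0 - r j 0) ^ 4 + (r i 1 - r j 1) ^ 4 + ((r i 2 - r j 2) / c) ^ 4) else 0) :=
      fun i => Finset.sum_nonneg fun j _ => hterm i j
    have hstep1 : (if i0 < j0 then
        α i0 j0 * ((r i0 0 - r j0 0) ^ 4 + (r i0 1 - r j0 1) ^ 4 + ((r i0 2 - r j0 2) / c) ^ 4) else 0)
        ≤ ∑ j : Fin m, (if i0 < j then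
        α i0 j * ((r i0 0 - r j 0) ^ 4 + (r i0 1 - r j 1) ^ 4 + ((r i0 2 - r j 2) / c) ^ 4) else 0) :=
      Finset.single_le_sum (fun j _ => hterm i0 j) (Finset.mem_univ j0)
    have hstep2 : (∑ j : Fin m, (if i0 < j then
        α i0 j * ((r i0 0 - r j 0) ^ 4 + (r i0 1 - r j 1) ^ 4 + ((r i0 2 - r j 2) / c) ^ 4) else 0))
        ≤ F r := by
      rw [hF]
      exact Finset.single_le_sum (fun i _ => hinner i) (Finset.mem_univ i0)
    have hval : 0 < (if i0 < j0 then
        α i0 j0 * ((r i0 0 - r j0 0) ^ 4 + (r i0 1 - r j0 1) ^ 4 + ((r i0 2 - r j0 2) / c) ^ 4) else 0) := by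
      rw [if_pos hlt]; exact mul_pos hαpos hbr
    linarith
  intro h0
  rw [h0] at heuler
  simp at heuler
  linarith
end

section
/- Suppose A_k ∈ ℝ^{1×n} and b_k ∈ ℝ for k = 1,...,N, and suppose that for every convex combination (α_k) in the simplex D = {α : α_k ≥ 0, Σα_k = 1}, the vector Σ_k α_k A_k is nonzero. Then there exists a common v ∈ ℝ^n satisfying A_k v ≤ b_k strictly for all k simultaneously, i.e., min_k (−A_k v + b_k) > 0 for some v; in particular the set {v : A_k v ≤ b_k for all k} is nonempty. -/
open Matrix

/-- if no convex combination of the rows A_k vanishes, then some v satisfies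
all constraints strictly: min_k (−A_k v + b_k) > 0; in particular the constraint set is nonempty. -/
theorem stmt4 (n N : ℕ) (A : Fin N → Fin n → ℝ) (b : Fin N → ℝ)
    (hA : ∀ α : Fin N → ℝ, (∀ k, 0 ≤ α k) → ∑ k, α k = 1 → ∑ k, α k • A k ≠ 0) :
    (∃ v : Fin n → ℝ, ∀ k, 0 < -(A k ⬝ᵥ v) + b k) ∧
      {v : Fin n → ℝ | ∀ k, A k ⬝ᵥ v ≤ b k}.Nonempty := by
  suffices h : ∃ v : Fin n → ℝ, ∀ k, 0 < -(A k ⬝ᵥ v) + b k by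
    obtain ⟨v, hv⟩ := h
    exact ⟨⟨v, hv⟩, ⟨v, fun k => by have := hv k; linarith⟩⟩
  rcases Nat.eq_zero_or_pos N with hN | hN
  · exact ⟨0, fun k => absurd k.isLt (by omega)⟩
  -- 0 is not in the convex hull of the rows
  have h0 : (0 : Fin n → ℝ) ∉ convexHull ℝ (Set.range A) := by
    intro hmem
    rw [convexHull_range_eq_exists_affineCombination] at hmem
    obtain ⟨s, w, hw0, hw1, hcomb⟩ := hmem
    rw [Finset.affineCombination_eq_linear_combination _ _ _ hw1] at hcomb
    set α : Fin N → ℝ := fun k => if k ∈ s then w k else 0 with hα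
    refine hA α (fun k => ?_) ?_ ?_
    · by_cases hk : k ∈ s
      · simpa [hα, hk] using hw0 k hk
      · simp [hα, hk]
    · rw [← hw1, ← Finset.sum_subset (Finset.subset_univ s)
        (fun k _ hk => show α k = 0 by simp [hα, hk])]
      exact Finset.sum_congr rfl fun k hk => by simp [hα, hk]
    · have : ∑ k, α k • A k = ∑ k ∈ s, w k • A k := by
        rw [← Finset.sum_subset (Finset.subset_univ s)
          (fun k _ hk => show α k • A k = 0 by simp [hα, hk])]
        exact Finset.sum_congr rfl fun k hk => by simp [hα, hk]
      rw [this, hcomb]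
  -- separate 0 from the compact convex hull
  have hconv : Convex ℝ (convexHull ℝ (Set.range A)) := convex_convexHull _ _
  have hclosed : IsClosed (convexHull ℝ (Set.range A)) :=
    ((Set.finite_range A).isCompact_convexHull ℝ).isClosed
  obtain ⟨f, u, hfu, hub⟩ := geometric_hahn_banach_point_closed hconv hclosed h0
  have hu : 0 < u := by simpa using hfu
  -- the vector representing f
  set w : Fin n → ℝ := fun j => f (Pi.single j 1) with hwdef
  have hdot : ∀ k, A k ⬝ᵥ w = f (A k) := by
    intro k
    have : A k = ∑ j, (A k j) • (Pi.single j 1 : Fin n → ℝ) := by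
      funext i
      simp [Finset.sum_apply, Pi.single_apply, mul_comm]
    calc A k ⬝ᵥ w = ∑ j, A k j * f (Pi.single j 1) := rfl
      _ = f (∑ j, (A k j) • (Pi.single j 1 : Fin n → ℝ)) := by
          rw [map_sum]; simp [smul_eq_mul]
      _ = f (A k) := by rw [← this]
  have hfAk : ∀ k, u < f (A k) := fun k =>
    hub _ (subset_convexHull ℝ _ ⟨k, rfl⟩)
  -- choose a large scaling
  obtain ⟨k0⟩ : Nonempty (Fin N) := ⟨⟨0, hN⟩⟩
  set t : ℝ := max 0 (Finset.univ.sup' ⟨k0, Finset.mem_univ k0⟩ (fun k => (1 - b k) / u))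
  have ht0 : 0 ≤ t := le_max_left _ _
  refine ⟨(-t) • w, fun k => ?_⟩
  have hAv : A k ⬝ᵥ ((-t) • w) = -t * f (A k) := by
    rw [dotProduct_smul, hdot, smul_eq_mul]
  rw [hAv]
  have htk : (1 - b k) / u ≤ t :=
    le_trans (Finset.le_sup' (f := fun k => (1 - b k) / u) (Finset.mem_univ k)) (le_max_right _ _)
  have h1 : 1 - b k ≤ t * u := by
    rw [div_le_iff₀ hu] at htk; linarith
  have h2 : t * u ≤ t * f (A k) := by
    exact mul_le_mul_of_nonneg_left (le_of_lt (hfAk k)) ht0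
  nlinarith
end

section
/- Given a team of m quadrotors with pairwise distinct positions r_i ∈ ℝ³, the set K_safe = {v ∈ ℝ^{3m} : A_{ij}(q_i,q_j)·v ≤ b_{ij}(q_i,q_j) for all i < j} is nonempty, where A_{ij} = −(e_i − e_j)^T ⊗ [4(x_i−x_j)³, 4(y_i−y_j)³, 4(z_i−z_j)³/c⁴]. -/
/-- Theorem 2 of the paper: for pairwise distinct quadrotor positions,
the set K_safe of controls satisfying all pairwise barrier constraints
A_{ij}·v ≤ b_{ij}, with A_{ij} = −(e_i−e_j)ᵀ ⊗ [4Δx³, 4Δy³, 4Δz³/c⁴], is nonempty. -/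
theorem stmt5 (m : ℕ) (hm : 2 ≤ m) (c : ℝ) (hc : 0 < c)
    (r : Fin m → Fin 3 → ℝ) (hdist : ∀ i j : Fin m, i ≠ j → r i ≠ r j)
    (b : Fin m → Fin m → ℝ) :
    ∃ v : Fin m → Fin 3 → ℝ, ∀ i j : Fin m, i < j →
      -((4 * (r i 0 - r j 0) ^ 3) * (v i 0 - v j 0)
        + (4 * (r i 1 - r j 1) ^ 3) * (v i 1 - v j 1)
        + (4 * (r i 2 - r j 2) ^ 3 / c ^ 4) * (v i 2 - v j 2)) ≤ b i j := by
  set S : Fin m → Fin m → ℝ := fun i j =>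
    4 * (r i 0 - r j 0) ^ 4 + 4 * (r i 1 - r j 1) ^ 4
      + 4 * (r i 2 - r j 2) ^ 4 / c ^ 4 with hS
  have hSpos : ∀ i j : Fin m, i ≠ j → 0 < S i j := by
    intro i j hij
    have hne : r i ≠ r j := hdist i j hij
    have h4 : 0 < c ^ 4 := by positivity
    have : ∃ k : Fin 3, r i k ≠ r j k := by
      by_contra h
      push_neg at h
      exact hne (funext h)
    obtain ⟨k, hk⟩ := this
    have hk' : 0 < (r i k - r j k) ^ 4 := by
      have : r i k - r j k ≠ 0 := sub_ne_zero.mpr hk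
      positivity
    have h0 : (0:ℝ) ≤ (r i 0 - r j 0) ^ 4 := by positivity
    have h1 : (0:ℝ) ≤ (r i 1 - r j 1) ^ 4 := by positivity
    have h2 : (0:ℝ) ≤ 4 * (r i 2 - r j 2) ^ 4 / c ^ 4 := by positivity
    simp only [hS]
    fin_cases k
    · have hk'' : 0 < (r i 0 - r j 0) ^ 4 := hk'
      nlinarith
    · have hk'' : 0 < (r i 1 - r j 1) ^ 4 := hk'
      nlinarith
    · have hk'' : 0 < (r i 2 - r j 2) ^ 4 := hk'
      have h2' : 0 < (r i 2 - r j 2) ^ 4 := hk''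
      have : 0 < 4 * (r i 2 - r j 2) ^ 4 / c ^ 4 := by positivity
      nlinarith
  set t : ℝ := ((Finset.univ.sup fun p : Fin m × Fin m => ⌈-b p.1 p.2 / S p.1 p.2⌉₊ : ℕ) : ℝ)
    with ht
  refine ⟨fun i k => t * r i k, fun i j hij => ?_⟩
  have hne : i ≠ j := ne_of_lt hij
  have hSp := hSpos i j hne
  have hle : -b i j / S i j ≤ t := by
    calc -b i j / S i j ≤ (⌈-b i j / S i j⌉₊ : ℝ) := Nat.le_ceil _
    _ ≤ t := by
        rw [ht]
        exact_mod_cast Finset.le_sup (f := fun p : Fin m × Fin m => ⌈-b p.1 p.2 / S p.1 p.2⌉₊)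
          (Finset.mem_univ (i, j))
  have key : -b i j ≤ t * S i j := by
    rw [div_le_iff₀ hSp] at hle
    linarith
  have expand : (4 * (r i 0 - r j 0) ^ 3) * (t * r i 0 - t * r j 0)
        + (4 * (r i 1 - r j 1) ^ 3) * (t * r i 1 - t * r j 1)
        + (4 * (r i 2 - r j 2) ^ 3 / c ^ 4) * (t * r i 2 - t * r j 2) = t * S i j := by
    simp only [hS]
    field_simp
  rw [expand]
  linarith
end

section
/- Let h : [0,∞) → ℝ be C⁴, let p₁, p₂, p₃, p₄ > 0, and define y_i = (d/dt + p₁)∘(d/dt + p₂)∘...∘(d/dt + p_i) h for i = 1,2,3,4, with y₀ = h. If y_i(0) ≥ 0 for i = 0,1,2,3 and y₄(t) ≥ 0 for all t ≥ 0, then h(t) ≥ 0 for all t ≥ 0. -/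
/-- The first-order operator (d/dt + p). -/
noncomputable def Lop (p : ℝ) (f : ℝ → ℝ) : ℝ → ℝ := fun t => deriv f t + p * f t

lemma lop_contDiff {f : ℝ → ℝ} {n : ℕ} (p : ℝ) (hf : ContDiff ℝ (n + 1) f) :
    ContDiff ℝ n (Lop p f) := by
  have := (contDiff_succ_iff_deriv (n := n)).mp (by exact_mod_cast hf)
  exact this.2.2.add ((hf.of_succ).const_smul p)

lemma lop_comm {f : ℝ → ℝ} (p q : ℝ) (hf : ContDiff ℝ 2 f) :
    Lop p (Lop q f) = Lop q (Lop p f) := by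
  have hd1 : Differentiable ℝ f := hf.differentiable (by norm_num)
  have hd2 : Differentiable ℝ (deriv f) :=
    ((contDiff_succ_iff_deriv (n := 1)).mp (by exact_mod_cast hf)).2.2.differentiable (by norm_num)
  funext t
  have e1 : ∀ r : ℝ, deriv (Lop r f) t = deriv (deriv f) t + r * deriv f t := by
    intro r
    unfold Lop
    rw [deriv_fun_add (hd2 t) ((hd1 t).const_mul r), deriv_const_mul r (hd1 t)]
  simp only [Lop, e1]; ring

lemma lop_comparison {f : ℝ → ℝ} (p : ℝ) (hf : Differentiable ℝ f)
    (h0 : 0 ≤ f 0) (hL : ∀ t, 0 ≤ t → 0 ≤ Lop p f t) :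
    ∀ t, 0 ≤ t → 0 ≤ f t := by
  intro t ht
  set g : ℝ → ℝ := fun s => Real.exp (p * s) * f s with hg
  have hgd : ∀ s, HasDerivAt g (Real.exp (p * s) * Lop p f s) s := by
    intro s
    have h1 : HasDerivAt (fun s : ℝ => Real.exp (p * s)) (Real.exp (p * s) * p) s := by
      simpa [Function.comp_def] using (Real.hasDerivAt_exp (p * s)).comp s ((hasDerivAt_id s).const_mul p)
    have := h1.fun_mul (hf s).hasDerivAt
    refine this.congr_deriv ?_
    simp [Lop]; ring
  have hmono : MonotoneOn g (Set.Ici (0:ℝ)) := by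
    apply monotoneOn_of_deriv_nonneg (convex_Ici 0)
    · exact ((Real.continuous_exp.comp (continuous_const.mul continuous_id)).mul
        hf.continuous).continuousOn
    · exact fun s _ => (hgd s).differentiableAt.differentiableWithinAt
    · intro s hs
      rw [interior_Ici] at hs
      rw [(hgd s).deriv]
      exact mul_nonneg (Real.exp_pos _).le (hL s (le_of_lt hs))
  have h01 : g 0 ≤ g t := hmono Set.self_mem_Ici ht ht
  have hg0 : g 0 = f 0 := by simp [hg]
  have : 0 ≤ Real.exp (p * t) * f t := by
    rw [hg0] at h01; exact le_trans h0 h01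
  nlinarith [Real.exp_pos (p * t)]

/-- ECBF forward invariance, relative degree 4: with
y_i = (d/dt+p₁)∘…∘(d/dt+p_i) h, if y_i(0) ≥ 0 for i = 0,1,2,3 and y₄(t) ≥ 0 for all
t ≥ 0, then h(t) ≥ 0 for all t ≥ 0. -/
theorem stmt11 (h : ℝ → ℝ) (hh : ContDiff ℝ 4 h)
    (p₁ p₂ p₃ p₄ : ℝ) (hp₁ : 0 < p₁) (hp₂ : 0 < p₂) (hp₃ : 0 < p₃) (hp₄ : 0 < p₄)
    (h0 : 0 ≤ h 0)
    (h1 : 0 ≤ Lop p₁ h 0)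
    (h2 : 0 ≤ Lop p₁ (Lop p₂ h) 0)
    (h3 : 0 ≤ Lop p₁ (Lop p₂ (Lop p₃ h)) 0)
    (h4 : ∀ t, 0 ≤ t → 0 ≤ Lop p₁ (Lop p₂ (Lop p₃ (Lop p₄ h))) t) :
    ∀ t, 0 ≤ t → 0 ≤ h t := by
  have hC2 : ContDiff ℝ 2 h := hh.of_le (by norm_num)
  have hC3 : ContDiff ℝ 3 h := hh.of_le (by norm_num)
  -- smoothness levels
  have hL1 : ∀ p : ℝ, ContDiff ℝ 3 (Lop p h) := fun p => lop_contDiff p (by exact_mod_cast hh)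
  have hL2 : ∀ p q : ℝ, ContDiff ℝ 2 (Lop p (Lop q h)) :=
    fun p q => lop_contDiff p (hL1 q)
  have hL3 : ∀ p q r : ℝ, ContDiff ℝ 1 (Lop p (Lop q (Lop r h))) :=
    fun p q r => lop_contDiff p (hL2 q r)
  -- commute y₄ : Lop p₁ (Lop p₂ (Lop p₃ (Lop p₄ h))) = Lop p₄ (Lop p₁ (Lop p₂ (Lop p₃ h)))
  have c1 : Lop p₃ (Lop p₄ h) = Lop p₄ (Lop p₃ h) := lop_comm _ _ hC2
  have c2 : Lop p₂ (Lop p₄ (Lop p₃ h)) = Lop p₄ (Lop p₂ (Lop p₃ h)) :=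
    lop_comm _ _ ((hL1 p₃).of_le (by norm_num))
  have c3 : Lop p₁ (Lop p₄ (Lop p₂ (Lop p₃ h))) = Lop p₄ (Lop p₁ (Lop p₂ (Lop p₃ h))) :=
    lop_comm _ _ (hL2 p₂ p₃)
  have e4 : Lop p₁ (Lop p₂ (Lop p₃ (Lop p₄ h))) = Lop p₄ (Lop p₁ (Lop p₂ (Lop p₃ h))) := by
    rw [c1, c2, c3]
  -- step 1 : y₃ ≥ 0 on [0,∞)
  have s3 : ∀ t, 0 ≤ t → 0 ≤ Lop p₁ (Lop p₂ (Lop p₃ h)) t := by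
    apply lop_comparison p₄ ((hL3 p₁ p₂ p₃).differentiable (by norm_num)) h3
    intro t ht
    have := h4 t ht
    rwa [e4] at this
  -- commute y₃ outward in p₃
  have d1 : Lop p₂ (Lop p₃ h) = Lop p₃ (Lop p₂ h) := lop_comm _ _ hC2
  have d2 : Lop p₁ (Lop p₃ (Lop p₂ h)) = Lop p₃ (Lop p₁ (Lop p₂ h)) :=
    lop_comm _ _ ((hL1 p₂).of_le (by norm_num))
  have e3 : Lop p₁ (Lop p₂ (Lop p₃ h)) = Lop p₃ (Lop p₁ (Lop p₂ h)) := by rw [d1, d2]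
  have s2 : ∀ t, 0 ≤ t → 0 ≤ Lop p₁ (Lop p₂ h) t := by
    apply lop_comparison p₃ ((hL2 p₁ p₂).differentiable (by norm_num)) h2
    intro t ht
    have := s3 t ht
    rwa [e3] at this
  have e2 : Lop p₁ (Lop p₂ h) = Lop p₂ (Lop p₁ h) := lop_comm _ _ hC2
  have s1 : ∀ t, 0 ≤ t → 0 ≤ Lop p₁ h t := by
    apply lop_comparison p₂ ((hL1 p₁).differentiable (by norm_num)) h1
    intro t ht
    have := s2 t ht
    rwa [e2] at this
  exact lop_comparison p₁ (hh.differentiable (by norm_num)) h0 s1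
end

section
/- Let K ∈ ℝ^{1×4} be chosen so that F − GK is Hurwitz (all eigenvalues have negative real part), where F is the 4×4 shift matrix and G = e₄. If η : [0,∞) → ℝ⁴ satisfies η̇ = (F − GK)η + G·w(t) with w(t) ≥ 0 for all t, and η(0) has all components obtained from poles placed at distinct negative reals, then the first component η₁(t) satisfies η₁(t) ≥ (C e^{(F−GK)t} η(0))₁ where C = (1,0,0,0). -/
open Polynomial

/-- The 4×4 nilpotent shift matrix (ones on the superdiagonal). -/
def Fshift : Matrix (Fin 4) (Fin 4) ℝ := fun i j => if (i : ℕ) + 1 = (j : ℕ) then 1 else 0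

/-- G = e₄ = (0,0,0,1)ᵀ. -/
def Gvec : Fin 4 → ℝ := ![0, 0, 0, 1]

attribute [local instance] Matrix.linftyOpNormedRing Matrix.linftyOpNormedAlgebra

/-- Scalar comparison: solutions of `f' = -a f + g` with `f 0 = 0` and `g ≥ 0` stay nonneg. -/
lemma ode_nonneg (a : ℝ) (f g : ℝ → ℝ) (hf : ∀ s, HasDerivAt f (-(a * f s) + g s) s)
    (h0 : f 0 = 0) (hg : ∀ s, 0 ≤ s → 0 ≤ g s) : ∀ t, 0 ≤ t → 0 ≤ f t := by
  intro t ht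
  have hF' : ∀ s, HasDerivAt (fun u => Real.exp (a*u) * f u) (Real.exp (a*s) * g s) s := by
    intro s
    have h1 : HasDerivAt (fun u : ℝ => Real.exp (a*u)) (Real.exp (a*s) * a) s := by
      simpa [mul_comm, Function.comp_def] using (Real.hasDerivAt_exp (a*s)).comp s ((hasDerivAt_id s).const_mul a)
    have h2 := h1.mul (hf s)
    exact h2.congr_deriv (by ring)
  have mono : MonotoneOn (fun u => Real.exp (a*u) * f u) (Set.Icc 0 t) := by
    apply monotoneOn_of_deriv_nonneg (convex_Icc 0 t)
    · exact fun s _ => (hF' s).continuousAt.continuousWithinAt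
    · intro s _; exact (hF' s).differentiableAt.differentiableWithinAt
    · intro s hs
      rw [interior_Icc] at hs
      rw [(hF' s).deriv]
      exact mul_nonneg (Real.exp_pos _).le (hg s hs.1.le)
  have h := mono (Set.left_mem_Icc.mpr ht) (Set.right_mem_Icc.mpr ht) ht
  simp only [h0, mul_zero] at h
  nlinarith [Real.exp_pos (a*t), h]

set_option maxHeartbeats 1000000 in
lemma charpoly_A (K : Fin 4 → ℝ) : (Fshift - Matrix.vecMulVec Gvec K).charpoly
    = X^4 + C (K 3)*X^3 + C (K 2)*X^2 + C (K 1)*X + C (K 0) := by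
  have hA : (Fshift - Matrix.vecMulVec Gvec K).charmatrix =
      !![X, -1, 0, 0; 0, X, -1, 0; 0, 0, X, -1; C (K 0), C (K 1), C (K 2), X + C (K 3)] := by
    ext i j : 2
    simp only [Matrix.charmatrix_apply, Matrix.sub_apply, Matrix.vecMulVec_apply]
    fin_cases i <;> fin_cases j <;>
      simp [Matrix.charmatrix_apply, Matrix.sub_apply, Fshift, Gvec, Matrix.vecMulVec_apply, Matrix.diagonal,
        Fin.ext_iff, show ((3:Fin 4):ℕ) = 3 from rfl]
  rw [Matrix.charpoly, hA]
  simp [Matrix.det_succ_row_zero, Fin.sum_univ_succ, Matrix.det_fin_three, Fin.succAbove]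
  ring

/-- `M ↦ M.mulVec v` as a continuous linear map. -/
noncomputable def mulVecCLM (v : Fin 4 → ℝ) : Matrix (Fin 4) (Fin 4) ℝ →L[ℝ] (Fin 4 → ℝ) :=
  LinearMap.toContinuousLinearMap
    { toFun := fun M => M.mulVec v
      map_add' := fun M N => Matrix.add_mulVec _ _ _
      map_smul' := fun c M => Matrix.smul_mulVec c M v }

lemma mulVecCLM_apply (v : Fin 4 → ℝ) (M : Matrix (Fin 4) (Fin 4) ℝ) :
    mulVecCLM v M = M.mulVec v := rfl

/-- ECBF comparison system: if K places the poles of F − GK at distinct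
negative reals −p_i (so F − GK is Hurwitz) and η̇ = (F−GK)η + G·w with continuous
nonnegative forcing w, then the first component of η dominates that of the unforced
solution: η₁(t) ≥ (e^{(F−GK)t} η(0))₁ for all t ≥ 0. -/
theorem stmt18 (p : Fin 4 → ℝ) (hp : ∀ i, 0 < p i) (hdist : Function.Injective p)
    (K : Fin 4 → ℝ)
    (hK : (Fshift - Matrix.vecMulVec Gvec K).charpoly = ∏ i, (X + C (p i)))
    (η : ℝ → Fin 4 → ℝ) (w : ℝ → ℝ) (hw_cont : Continuous w)
    (hw : ∀ t, 0 ≤ t → 0 ≤ w t)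
    (hη : ∀ t, HasDerivAt η
      ((Fshift - Matrix.vecMulVec Gvec K).mulVec (η t) + w t • Gvec) t) :
    ∀ t, 0 ≤ t →
      (NormedSpace.exp (t • (Fshift - Matrix.vecMulVec Gvec K))).mulVec (η 0) 0 ≤ η t 0 := by
  set A := Fshift - Matrix.vecMulVec Gvec K with hAdef
  -- Step 1: identify K with elementary symmetric functions of p
  have heq : X^4 + C (K 3)*X^3 + C (K 2)*X^2 + C (K 1)*X + C (K 0)
      = X^4 + C (p 0 + p 1 + p 2 + p 3)*X^3
        + C (p 0*p 1 + p 0*p 2 + p 0*p 3 + p 1*p 2 + p 1*p 3 + p 2*p 3)*X^2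
        + C (p 0*p 1*p 2 + p 0*p 1*p 3 + p 0*p 2*p 3 + p 1*p 2*p 3)*X
        + C (p 0*p 1*p 2*p 3) := by
    rw [← charpoly_A, hK, Fin.prod_univ_four]
    simp only [map_add, map_mul]
    ring
  have hK3 : K 3 = p 0 + p 1 + p 2 + p 3 := by
    have := congrArg (fun q => coeff q 3) heq
    simp only [coeff_add, coeff_C_mul, coeff_X_pow, coeff_C, coeff_X] at this
    norm_num at this
    linarith [this]
  have hK2 : K 2 = p 0*p 1 + p 0*p 2 + p 0*p 3 + p 1*p 2 + p 1*p 3 + p 2*p 3 := by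
    have := congrArg (fun q => coeff q 2) heq
    simp only [coeff_add, coeff_C_mul, coeff_X_pow, coeff_C, coeff_X] at this
    norm_num at this
    linarith [this]
  have hK1 : K 1 = p 0*p 1*p 2 + p 0*p 1*p 3 + p 0*p 2*p 3 + p 1*p 2*p 3 := by
    have := congrArg (fun q => coeff q 1) heq
    simp only [coeff_add, coeff_C_mul, coeff_X_pow, coeff_C, coeff_X] at this
    norm_num at this
    linarith [this]
  have hK0 : K 0 = p 0*p 1*p 2*p 3 := by
    have := congrArg (fun q => coeff q 0) heq
    simp only [coeff_add, coeff_C_mul, coeff_X_pow, coeff_C, coeff_X] at this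
    norm_num at this
    linarith [this]
  -- Step 2: the unforced solution
  set φ : ℝ → Fin 4 → ℝ := fun u => (NormedSpace.exp (u • A)).mulVec (η 0) with hφdef
  have hφ : ∀ s, HasDerivAt φ (A.mulVec (φ s)) s := by
    intro s
    have h1 := hasDerivAt_exp_smul_const' (𝕂 := ℝ) A s
    have h2 := (mulVecCLM (η 0)).hasFDerivAt.comp_hasDerivAt s h1
    refine h2.congr_deriv ?_
    exact (Matrix.mulVec_mulVec (η 0) A (NormedSpace.exp (s • A))).symm
  -- component derivatives
  have hηi : ∀ i s, HasDerivAt (fun u => η u i) ((A.mulVec (η s) + w s • Gvec) i) s :=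
    fun i s => hasDerivAt_pi.mp (hη s) i
  have hφi : ∀ i s, HasDerivAt (fun u => φ u i) ((A.mulVec (φ s)) i) s :=
    fun i s => hasDerivAt_pi.mp (hφ s) i
  -- entries of A.mulVec
  have hmv : ∀ (x : Fin 4 → ℝ),
      A.mulVec x 0 = x 1 ∧ A.mulVec x 1 = x 2 ∧ A.mulVec x 2 = x 3 ∧
      A.mulVec x 3 = -(K 0 * x 0 + K 1 * x 1 + K 2 * x 2 + K 3 * x 3) := by
    intro x
    refine ⟨?_, ?_, ?_, ?_⟩ <;>
      simp only [hAdef, Matrix.mulVec, dotProduct, Fin.sum_univ_four, Matrix.sub_apply, Matrix.vecMulVec_apply] <;>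
      simp [hAdef, Matrix.mulVec, dotProduct, Fin.sum_univ_four, Fshift, Gvec,
        Matrix.vecMulVec_apply, Matrix.sub_apply, show ((3:Fin 4):ℕ) = 3 from rfl] <;> ring
  -- differences
  set d : Fin 4 → ℝ → ℝ := fun i u => η u i - φ u i with hddef
  have hd0 : ∀ i, d i 0 = 0 := by
    intro i
    simp [hddef, hφdef, zero_smul, NormedSpace.exp_zero, Matrix.one_mulVec]
  have hdD : ∀ i s, HasDerivAt (d i) ((A.mulVec (fun j => d j s)) i + w s * Gvec i) s := by
    intro i s
    have h := (hηi i s).sub (hφi i s)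
    have harr : (A.mulVec (η s) + w s • Gvec) i - A.mulVec (φ s) i
        = A.mulVec (fun j => d j s) i + w s * Gvec i := by
      rcases hmv (η s) with ⟨e0, e1, e2, e3⟩
      rcases hmv (φ s) with ⟨f0, f1, f2, f3⟩
      rcases hmv (fun j => d j s) with ⟨g0, g1, g2, g3⟩
      simp only [hddef] at g0 g1 g2 g3
      fin_cases i <;>
        simp [e0, e1, e2, e3, f0, f1, f2, f3, g0, g1, g2, g3, hddef, Gvec] <;> ring
    rw [harr] at h
    exact h
  have hD0 : ∀ s, HasDerivAt (d 0) (d 1 s) s := by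
    intro s; have := hdD 0 s
    simpa [(hmv (fun j => d j s)).1, Gvec] using this
  have hD1 : ∀ s, HasDerivAt (d 1) (d 2 s) s := by
    intro s; have := hdD 1 s
    simpa [(hmv (fun j => d j s)).2.1, Gvec] using this
  have hD2 : ∀ s, HasDerivAt (d 2) (d 3 s) s := by
    intro s; have := hdD 2 s
    simpa [(hmv (fun j => d j s)).2.2.1, Gvec] using this
  have hD3 : ∀ s, HasDerivAt (d 3)
      (-(K 0 * d 0 s + K 1 * d 1 s + K 2 * d 2 s + K 3 * d 3 s) + w s) s := by
    intro s; have := hdD 3 s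
    simpa [(hmv (fun j => d j s)).2.2.2, Gvec] using this
  -- cascade
  set v1 : ℝ → ℝ := fun s => d 1 s + p 0 * d 0 s with hv1def
  set v2 : ℝ → ℝ := fun s => d 2 s + (p 0 + p 1) * d 1 s + (p 0 * p 1) * d 0 s with hv2def
  set v3 : ℝ → ℝ := fun s => d 3 s + (p 0 + p 1 + p 2) * d 2 s
      + (p 0*p 1 + p 0*p 2 + p 1*p 2) * d 1 s + (p 0*p 1*p 2) * d 0 s with hv3def
  have hv3 : ∀ s, HasDerivAt v3 (-(p 3 * v3 s) + w s) s := by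
    intro s
    have h := ((hD3 s).add ((hD2 s).const_mul (p 0 + p 1 + p 2))).add
      (((hD1 s).const_mul (p 0*p 1 + p 0*p 2 + p 1*p 2)).add
        ((hD0 s).const_mul (p 0*p 1*p 2)))
    have : HasDerivAt v3 (-(K 0 * d 0 s + K 1 * d 1 s + K 2 * d 2 s + K 3 * d 3 s) + w s
        + (p 0 + p 1 + p 2) * d 3 s
        + ((p 0*p 1 + p 0*p 2 + p 1*p 2) * d 2 s + (p 0*p 1*p 2) * d 1 s)) s := by
      have hf : v3 = (d 3 + fun y => (p 0 + p 1 + p 2) * d 2 y) +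
          ((fun y => (p 0*p 1 + p 0*p 2 + p 1*p 2) * d 1 y) + fun y => p 0*p 1*p 2 * d 0 y) := by
        funext y; simp only [hv3def, Pi.add_apply]; ring
      rw [hf]; exact h
    convert this using 1
    rw [hK0, hK1, hK2, hK3]; simp only [hv3def]; ring
  have hv2 : ∀ s, HasDerivAt v2 (-(p 2 * v2 s) + v3 s) s := by
    intro s
    have h := ((hD2 s).add ((hD1 s).const_mul (p 0 + p 1))).add
      ((hD0 s).const_mul (p 0 * p 1))
    refine h.congr_deriv ?_
    simp only [hv2def, hv3def]; ring
  have hv1 : ∀ s, HasDerivAt v1 (-(p 1 * v1 s) + v2 s) s := by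
    intro s
    have h := (hD1 s).add ((hD0 s).const_mul (p 0))
    refine h.congr_deriv ?_
    simp only [hv1def, hv2def]; ring
  have hv0 : ∀ s, HasDerivAt (d 0) (-(p 0 * d 0 s) + v1 s) s := by
    intro s
    have h := hD0 s
    convert h using 1
    simp only [hv1def]; ring
  have h3 : ∀ t, 0 ≤ t → 0 ≤ v3 t :=
    ode_nonneg (p 3) v3 w hv3 (by simp [hv3def, hd0]) hw
  have h2 : ∀ t, 0 ≤ t → 0 ≤ v2 t :=
    ode_nonneg (p 2) v2 v3 hv2 (by simp [hv2def, hd0]) h3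
  have h1 : ∀ t, 0 ≤ t → 0 ≤ v1 t :=
    ode_nonneg (p 1) v1 v2 hv1 (by simp [hv1def, hd0]) h2
  have h0 : ∀ t, 0 ≤ t → 0 ≤ d 0 t :=
    ode_nonneg (p 0) (d 0) v1 hv0 (hd0 0) h1
  intro t ht
  have := h0 t ht
  simp only [hddef, hφdef] at this
  linarith
end

section
/- For real negative poles −p₁, −p₂, −p₃, −p₄ with p_i > 0, and F − GK the companion-form matrix with characteristic polynomial Π(s + p_i), the function t ↦ (e^{(F−GK)t} G)₁ = first component of e^{(F−GK)t}e₄ is nonnegative for all t ≥ 0. -/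
set_option maxHeartbeats 1600000

open Polynomial

lemma hd_exp (x t : ℝ) : HasDerivAt (fun s : ℝ => Real.exp (x*s)) (x * Real.exp (x*t)) t := by
  have h : HasDerivAt (fun s : ℝ => x*s) x t := by simpa using (hasDerivAt_id t).const_mul x
  simpa [mul_comm] using h.exp

lemma ode_nonneg_s19 (x : ℝ) (f h : ℝ → ℝ) (hf0 : f 0 = 0)
    (hf : ∀ t, HasDerivAt f (x * f t + h t) t)
    (hh : ∀ t, 0 ≤ t → 0 ≤ h t) : ∀ t, 0 ≤ t → 0 ≤ f t := by
  intro t ht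
  set φ : ℝ → ℝ := fun s => Real.exp (-x*s) * f s with hφdef
  have hφ : ∀ s, HasDerivAt φ (Real.exp (-x*s) * h s) s := by
    intro s
    have h1 := (hd_exp (-x) s).mul (hf s)
    refine h1.congr_deriv (Eq.symm ?_)
    ring
  have hmono : MonotoneOn φ (Set.Ici (0:ℝ)) := by
    apply monotoneOn_of_deriv_nonneg (convex_Ici 0)
    · exact fun s _ => (hφ s).continuousAt.continuousWithinAt
    · exact fun s _ => ((hφ s).differentiableAt).differentiableWithinAt
    · intro s hs
      rw [(hφ s).deriv]
      exact mul_nonneg (Real.exp_pos _).le (hh s (le_of_lt (by simpa using hs)))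
  have h0 : φ 0 ≤ φ t := hmono Set.self_mem_Ici (Set.mem_Ici.2 ht) ht
  have hφ0 : φ 0 = 0 := by simp [hφdef, hf0]
  have hφt : 0 ≤ φ t := hφ0 ▸ h0
  calc (0:ℝ) ≤ Real.exp (x*t) * φ t := mul_nonneg (Real.exp_pos (x*t)).le hφt
    _ = f t := by
        simp only [hφdef, ← mul_assoc, ← Real.exp_add]
        ring_nf
        simp

lemma coeff_id (x y D X : ℝ) (hD : D ≠ 0) (h : x - y ≠ 0) :
    y * (X/(D*(x-y))) + X/D = x * X / (D*(x-y)) := by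
  field_simp
  ring

lemma divdiff4_nonneg (a b c d : ℝ) (hab : a-b ≠ 0) (hac : a-c ≠ 0) (had : a-d ≠ 0)
    (hbc : b-c ≠ 0) (hbd : b-d ≠ 0) (hcd : c-d ≠ 0) :
    ∀ t, 0 ≤ t → 0 ≤ Real.exp (a*t)/((a-b)*(a-c)*(a-d)) - Real.exp (b*t)/((a-b)*(b-c)*(b-d))
      + Real.exp (c*t)/((a-c)*(b-c)*(c-d)) - Real.exp (d*t)/((a-d)*(b-d)*(c-d)) := by
  have hS2' : ∀ t, HasDerivAt (fun t => Real.exp (a*t)/(a-b) - Real.exp (b*t)/(a-b))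
      (b * (Real.exp (a*t)/(a-b) - Real.exp (b*t)/(a-b)) + Real.exp (a*t)) t := by
    intro t
    have := ((hd_exp a t).div_const (a-b)).sub ((hd_exp b t).div_const (a-b))
    refine this.congr_deriv (Eq.symm ?_)
    field_simp
    ring
  have hS2nn : ∀ t, 0 ≤ t → 0 ≤ Real.exp (a*t)/(a-b) - Real.exp (b*t)/(a-b) :=
    ode_nonneg_s19 b _ (fun t => Real.exp (a*t)) (by simp) hS2' (fun t _ => (Real.exp_pos _).le)
  have hS3' : ∀ t, HasDerivAt
      (fun t => Real.exp (a*t)/((a-b)*(a-c)) - Real.exp (b*t)/((a-b)*(b-c)) + Real.exp (c*t)/((a-c)*(b-c)))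
      (c * (Real.exp (a*t)/((a-b)*(a-c)) - Real.exp (b*t)/((a-b)*(b-c)) + Real.exp (c*t)/((a-c)*(b-c)))
        + (Real.exp (a*t)/(a-b) - Real.exp (b*t)/(a-b))) t := by
    intro t
    have key := (((hd_exp a t).div_const ((a-b)*(a-c))).sub ((hd_exp b t).div_const ((a-b)*(b-c)))).add
      ((hd_exp c t).div_const ((a-c)*(b-c)))
    refine key.congr_deriv (Eq.symm ?_)
    have h1 := coeff_id a c (a-b) (Real.exp (a*t)) hab hac
    have h2 := coeff_id b c (a-b) (Real.exp (b*t)) hab hbc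
    linear_combination h1 - h2
  have hS3nn : ∀ t, 0 ≤ t → 0 ≤ Real.exp (a*t)/((a-b)*(a-c)) - Real.exp (b*t)/((a-b)*(b-c))
      + Real.exp (c*t)/((a-c)*(b-c)) := by
    apply ode_nonneg_s19 c _ _ _ hS3' hS2nn
    field_simp
    ring
  have hS4' : ∀ t, HasDerivAt
      (fun t => Real.exp (a*t)/((a-b)*(a-c)*(a-d)) - Real.exp (b*t)/((a-b)*(b-c)*(b-d))
        + Real.exp (c*t)/((a-c)*(b-c)*(c-d)) - Real.exp (d*t)/((a-d)*(b-d)*(c-d)))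
      (d * (Real.exp (a*t)/((a-b)*(a-c)*(a-d)) - Real.exp (b*t)/((a-b)*(b-c)*(b-d))
        + Real.exp (c*t)/((a-c)*(b-c)*(c-d)) - Real.exp (d*t)/((a-d)*(b-d)*(c-d)))
        + (Real.exp (a*t)/((a-b)*(a-c)) - Real.exp (b*t)/((a-b)*(b-c)) + Real.exp (c*t)/((a-c)*(b-c)))) t := by
    intro t
    have key := ((((hd_exp a t).div_const ((a-b)*(a-c)*(a-d))).sub
      ((hd_exp b t).div_const ((a-b)*(b-c)*(b-d)))).add
      ((hd_exp c t).div_const ((a-c)*(b-c)*(c-d)))).sub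
      ((hd_exp d t).div_const ((a-d)*(b-d)*(c-d)))
    refine key.congr_deriv (Eq.symm ?_)
    have h1 := coeff_id a d ((a-b)*(a-c)) (Real.exp (a*t)) (mul_ne_zero hab hac) had
    have h2 := coeff_id b d ((a-b)*(b-c)) (Real.exp (b*t)) (mul_ne_zero hab hbc) hbd
    have h3 := coeff_id c d ((a-c)*(b-c)) (Real.exp (c*t)) (mul_ne_zero hac hbc) hcd
    linear_combination h1 - h2 + h3
  apply ode_nonneg_s19 d _ _ _ hS4' hS3nn
  field_simp
  ring

/-- for the companion-form closed loop F − GK with characteristic polynomial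
Π_i (s + p_i), p_i > 0 distinct, the impulse response t ↦ (e^{(F−GK)t} G)₁ is
nonnegative for all t ≥ 0. -/
theorem stmt19 (p : Fin 4 → ℝ) (hp : ∀ i, 0 < p i) (hdist : Function.Injective p)
    (K : Fin 4 → ℝ)
    (hK : (Fshift - Matrix.vecMulVec Gvec K).charpoly = ∏ i, (X + C (p i))) :
    ∀ t : ℝ, 0 ≤ t →
      0 ≤ (NormedSpace.exp (t • (Fshift - Matrix.vecMulVec Gvec K))).mulVec Gvec 0 := by
  intro T hT
  set A := Fshift - Matrix.vecMulVec Gvec K with hA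
  -- roots of the characteristic polynomial
  have hroot : ∀ i, (-p i)^4 + K 3 * (-p i)^3 + K 2 * (-p i)^2 + K 1 * (-p i) + K 0 = 0 := by
    intro i
    set x : ℝ := -p i with hx
    have h1 : Polynomial.eval x A.charpoly = Polynomial.eval x (∏ i, (X + C (p i))) := by rw [hK]
    have hR : Polynomial.eval x (∏ j, (X + C (p j))) = 0 := by
      rw [Polynomial.eval_prod]
      apply Finset.prod_eq_zero (Finset.mem_univ i)
      simp [hx]
    have hmap : (Matrix.charmatrix A).map (Polynomial.eval x) =
        Matrix.of ![![x, -1, 0, 0], ![0, x, -1, 0], ![0, 0, x, -1], ![K 0, K 1, K 2, x + K 3]] := by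
      ext i j
      fin_cases i <;> fin_cases j <;>
        simp [-Matrix.cons_vecMulVec, Matrix.charmatrix_apply, hA, Fshift, Gvec, Matrix.vecMulVec_apply, Matrix.one_apply] <;>
        first
          | (rw [if_pos (by decide)]; simp)
          | (rw [if_neg (by decide)]; simp)
    have hL : Polynomial.eval x A.charpoly =
        x^4 + K 3 * x^3 + K 2 * x^2 + K 1 * x + K 0 := by
      rw [Matrix.charpoly, ← Polynomial.coe_evalRingHom, RingHom.map_det,
        RingHom.mapMatrix_apply, Polynomial.coe_evalRingHom, hmap]
      simp [Matrix.det_succ_row_zero, Fin.sum_univ_succ, Fin.succAbove]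
      ring
    rw [hL, hR] at h1
    exact h1
  -- abbreviations
  set a : ℝ := -p 0 with ha
  set b : ℝ := -p 1 with hb
  set c : ℝ := -p 2 with hc
  set d : ℝ := -p 3 with hd
  have ne01 : p 0 ≠ p 1 := fun h => by have := hdist h; exact absurd this (by decide)
  have ne02 : p 0 ≠ p 2 := fun h => by have := hdist h; exact absurd this (by decide)
  have ne03 : p 0 ≠ p 3 := fun h => by have := hdist h; exact absurd this (by decide)
  have ne12 : p 1 ≠ p 2 := fun h => by have := hdist h; exact absurd this (by decide)
  have ne13 : p 1 ≠ p 3 := fun h => by have := hdist h; exact absurd this (by decide)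
  have ne23 : p 2 ≠ p 3 := fun h => by have := hdist h; exact absurd this (by decide)
  have hab : a - b ≠ 0 := fun h => ne01 (by rw [ha, hb] at h; linarith [sub_eq_zero.mp h])
  have hac : a - c ≠ 0 := fun h => ne02 (by rw [ha, hc] at h; linarith [sub_eq_zero.mp h])
  have had : a - d ≠ 0 := fun h => ne03 (by rw [ha, hd] at h; linarith [sub_eq_zero.mp h])
  have hbc : b - c ≠ 0 := fun h => ne12 (by rw [hb, hc] at h; linarith [sub_eq_zero.mp h])
  have hbd : b - d ≠ 0 := fun h => ne13 (by rw [hb, hd] at h; linarith [sub_eq_zero.mp h])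
  have hcd : c - d ≠ 0 := fun h => ne23 (by rw [hc, hd] at h; linarith [sub_eq_zero.mp h])
  have hroota := hroot 0; have hrootb := hroot 1; have hrootc := hroot 2; have hrootd := hroot 3
  rw [← ha] at hroota; rw [← hb] at hrootb; rw [← hc] at hrootc; rw [← hd] at hrootd
  -- explicit solution
  set w : ℕ → ℝ → ℝ := fun m t =>
    a^m * Real.exp (a*t)/((a-b)*(a-c)*(a-d)) - b^m * Real.exp (b*t)/((a-b)*(b-c)*(b-d))
      + c^m * Real.exp (c*t)/((a-c)*(b-c)*(c-d)) - d^m * Real.exp (d*t)/((a-d)*(b-d)*(c-d)) with hw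
  set g : ℝ → Fin 4 → ℝ := fun t => ![w 0 t, w 1 t, w 2 t, w 3 t] with hg
  -- f is the matrix-exponential trajectory
  set f : ℝ → Fin 4 → ℝ := fun t => (NormedSpace.exp (t • A)).mulVec Gvec with hf
  -- the mulVec structure of A
  have hAmul : ∀ v : Fin 4 → ℝ,
      A.mulVec v = ![v 1, v 2, v 3, -(K 0*v 0 + K 1*v 1 + K 2*v 2 + K 3*v 3)] := by
    intro v
    funext i
    fin_cases i <;>
      simp [-Matrix.cons_vecMulVec, hA, Matrix.mulVec, dotProduct, Fin.sum_univ_four, Fshift, Gvec,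
        Matrix.vecMulVec_apply, Matrix.sub_apply,
        show ((0:Fin 4):ℕ)=0 from rfl, show ((1:Fin 4):ℕ)=1 from rfl,
        show ((2:Fin 4):ℕ)=2 from rfl, show ((3:Fin 4):ℕ)=3 from rfl] <;> ring
  -- derivative of w m
  have hwderiv : ∀ (m : ℕ) (t : ℝ), HasDerivAt (w m)
      (a^(m+1) * Real.exp (a*t)/((a-b)*(a-c)*(a-d)) - b^(m+1) * Real.exp (b*t)/((a-b)*(b-c)*(b-d))
        + c^(m+1) * Real.exp (c*t)/((a-c)*(b-c)*(c-d)) - d^(m+1) * Real.exp (d*t)/((a-d)*(b-d)*(c-d))) t := by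
    intro m t
    have key := (((((hd_exp a t).const_mul (a^m)).div_const ((a-b)*(a-c)*(a-d))).sub
      (((hd_exp b t).const_mul (b^m)).div_const ((a-b)*(b-c)*(b-d)))).add
      (((hd_exp c t).const_mul (c^m)).div_const ((a-c)*(b-c)*(c-d)))).sub
      (((hd_exp d t).const_mul (d^m)).div_const ((a-d)*(b-d)*(c-d)))
    refine key.congr_deriv (Eq.symm ?_)
    ring
  -- g solves the ODE
  have hg' : ∀ t, HasDerivAt g (A.mulVec (g t)) t := by
    intro t
    rw [hAmul (g t)]
    apply hasDerivAt_pi.2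
    intro i
    fin_cases i
    · have h0 := hwderiv 0 t
      have : HasDerivAt (w 0) (w 1 t) t := by
        refine h0.congr_deriv (Eq.symm ?_)
        try simp [hw]
      simpa [hg] using this
    · have h1 := hwderiv 1 t
      have : HasDerivAt (w 1) (w 2 t) t := by
        refine h1.congr_deriv (Eq.symm ?_)
        try simp [hw]
      simpa [hg] using this
    · have h2 := hwderiv 2 t
      have : HasDerivAt (w 2) (w 3 t) t := by
        refine h2.congr_deriv (Eq.symm ?_)
        try simp [hw]
      simpa [hg] using this
    · have h3 := hwderiv 3 t
      have : HasDerivAt (w 3)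
          (-(K 0 * w 0 t + K 1 * w 1 t + K 2 * w 2 t + K 3 * w 3 t)) t := by
        refine h3.congr_deriv (Eq.symm ?_)
        simp only [hw]
        linear_combination (-(Real.exp (a*t)/((a-b)*(a-c)*(a-d)))) * hroota
          + (Real.exp (b*t)/((a-b)*(b-c)*(b-d))) * hrootb
          + (-(Real.exp (c*t)/((a-c)*(b-c)*(c-d)))) * hrootc
          + (Real.exp (d*t)/((a-d)*(b-d)*(c-d))) * hrootd
      simpa [hg] using this
  -- f solves the ODE
  have hf' : ∀ t, HasDerivAt f (A.mulVec (f t)) t := by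
    intro t
    letI : NormedRing (Matrix (Fin 4) (Fin 4) ℝ) := Matrix.linftyOpNormedRing
    letI : NormedAlgebra ℝ (Matrix (Fin 4) (Fin 4) ℝ) := Matrix.linftyOpNormedAlgebra
    have h1 := hasDerivAt_exp_smul_const' (𝕂 := ℝ) A t
    let Lm : Matrix (Fin 4) (Fin 4) ℝ →ₗ[ℝ] (Fin 4 → ℝ) :=
      { toFun := fun M => M.mulVec Gvec
        map_add' := fun M N => Matrix.add_mulVec M N Gvec
        map_smul' := fun r M => Matrix.smul_mulVec r M Gvec }
    let L := LinearMap.toContinuousLinearMap Lm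
    have h2 := L.hasFDerivAt.comp_hasDerivAt t h1
    have h3 : ∀ M : Matrix (Fin 4) (Fin 4) ℝ, L M = M.mulVec Gvec := fun M => rfl
    exact h2.congr_deriv ((h3 _).trans (Matrix.mulVec_mulVec _ _ _).symm)
  -- initial conditions agree
  have hf0 : f 0 = Gvec := by
    simp [hf, Matrix.one_mulVec]
  have hg0 : g 0 = Gvec := by
    funext i
    fin_cases i <;>
      simp only [hg, Gvec, Matrix.cons_val_zero, Matrix.cons_val_one, Matrix.head_cons,
        Matrix.cons_val_two, Matrix.cons_val_three, Matrix.tail_cons] <;>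
      simp only [hw, mul_zero, Real.exp_zero, pow_zero, pow_one, mul_one, one_mul] <;>
      (try norm_num) <;> field_simp <;> ring
  -- uniqueness of ODE solutions
  have hlip : ∃ C : NNReal, LipschitzWith C (fun y : Fin 4 → ℝ => A.mulVec y) := by
    let L := LinearMap.toContinuousLinearMap A.mulVecLin
    refine ⟨‖L‖₊, ?_⟩
    have : (fun y : Fin 4 → ℝ => A.mulVec y) = ⇑L := rfl
    rw [this]
    exact L.lipschitz
  obtain ⟨C, hC⟩ := hlip
  have huniq : f T = g T := by
    rcases eq_or_lt_of_le hT with h | h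
    · rw [← h, hf0, hg0]
    · have := ODE_solution_unique (v := fun (_ : ℝ) (y : Fin 4 → ℝ) => A.mulVec y) (K := C)
        (f := f) (g := g) (a := 0) (b := T)
        (fun _ => hC)
        (fun s _ => (hf' s).continuousAt.continuousWithinAt)
        (fun s _ => (hf' s).hasDerivWithinAt)
        (fun s _ => (hg' s).continuousAt.continuousWithinAt)
        (fun s _ => (hg' s).hasDerivWithinAt)
        (by rw [hf0, hg0])
      exact this (Set.mem_Icc.2 ⟨hT, le_refl T⟩)
  -- conclude
  have hfin : (NormedSpace.exp (T • A)).mulVec Gvec 0 = w 0 T := by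
    have : f T 0 = g T 0 := by rw [huniq]
    simpa [hf, hg] using this
  rw [hfin]
  have := divdiff4_nonneg a b c d hab hac had hbc hbd hcd T hT
  simpa [hw] using this
end
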